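/- Let q₀ ≥ 1 odd, (r,q₀) = 1, and let f(x,y) = Ax² + 2Bxy + Cy² with (C,q₀) = 1 and AC - B² = a². Define S_f(q₀,r;n,m) = q₀⁻² ∑_{k,ℓ mod q₀} e((r·f(k,ℓ) + nk + mℓ)/q₀). Then |S_f(q₀,r;n,m)| ≤ q₀^{-1/2}. -/

import Mathlib

open Complex Finset

/-- The normalized complete exponential sum
`S_f(q₀,r;n,m) = q₀⁻² ∑_{k,ℓ mod q₀} e((r f(k,ℓ) + nk + mℓ)/q₀)`
for `f(x,y) = Ax² + 2Bxy + Cy²`. -/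
noncomputable def Sf (A B C : ℤ) (q₀ : ℕ) (r n m : ℤ) : ℂ :=
  ((q₀ : ℂ) ^ 2)⁻¹ *
    ∑ k ∈ Finset.range q₀, ∑ l ∈ Finset.range q₀,
      Complex.exp (2 * Real.pi * Complex.I *
        ((r * (A * (k : ℤ) ^ 2 + 2 * B * k * l + C * (l : ℤ) ^ 2) + n * k + m * l : ℤ) : ℂ)
          / (q₀ : ℂ))

section aux

variable {N : ℕ} [NeZero N]

lemma std_abs (t : ZMod N) : ‖(ZMod.stdAddChar t : ℂ)‖ = 1 := by
  rw [ZMod.stdAddChar_apply]; exact Circle.norm_coe _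

lemma std_conj (t : ZMod N) :
    (starRingEnd ℂ) (ZMod.stdAddChar t) = ZMod.stdAddChar (-t) := by
  rw [AddChar.map_neg_eq_inv, Complex.inv_eq_conj (std_abs t)]

omit [NeZero N] in
lemma two_unit (hodd : Odd N) : IsUnit (2 : ZMod N) := by
  obtain ⟨k, hk⟩ := hodd
  refine IsUnit.of_mul_eq_one (-(k : ZMod N)) ?_
  have h0 : ((2 * k + 1 : ℕ) : ZMod N) = 0 := by rw [← hk]; exact ZMod.natCast_self N
  push_cast at h0
  linear_combination -h0

lemma gauss_abs (hodd : Odd N) (c d : ZMod N) (hc : IsUnit c) :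
    ‖(∑ y : ZMod N, ZMod.stdAddChar (c * y ^ 2 + d * y))‖ = Real.sqrt N := by
  set ψ : AddChar (ZMod N) ℂ := ZMod.stdAddChar with hψ
  set G : ℂ := ∑ y : ZMod N, ψ (c * y ^ 2 + d * y) with hG
  have h2c : IsUnit (2 * c) := (two_unit hodd).mul hc
  have key : G * (starRingEnd ℂ) G = (N : ℂ) := by
    rw [hG, map_sum]
    rw [Finset.sum_mul_sum]
    have step1 : ∀ z y : ZMod N,
        ψ (c * y ^ 2 + d * y) * (starRingEnd ℂ) (ψ (c * z ^ 2 + d * z))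
          = ψ (c * y ^ 2 + d * y - (c * z ^ 2 + d * z)) := by
      intro z y
      rw [std_conj, ← AddChar.map_add_eq_mul, sub_eq_add_neg]
    calc ∑ y : ZMod N, ∑ z : ZMod N,
          ψ (c * y ^ 2 + d * y) * (starRingEnd ℂ) (ψ (c * z ^ 2 + d * z))
        = ∑ z : ZMod N, ∑ y : ZMod N,
          ψ (c * y ^ 2 + d * y - (c * z ^ 2 + d * z)) := by
          rw [Finset.sum_comm]
          exact Finset.sum_congr rfl fun z _ => Finset.sum_congr rfl fun y _ => step1 z y
      _ = ∑ z : ZMod N, ∑ h : ZMod N, ψ (c * h ^ 2 + d * h) * ψ (z * (2 * c * h)) := by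
          refine Finset.sum_congr rfl fun z _ => ?_
          rw [← Fintype.sum_equiv (Equiv.addLeft z)
            (fun h => ψ (c * (z + h) ^ 2 + d * (z + h) - (c * z ^ 2 + d * z)))
            (fun y => ψ (c * y ^ 2 + d * y - (c * z ^ 2 + d * z))) (fun h => rfl)]
          refine Finset.sum_congr rfl fun h _ => ?_
          rw [← AddChar.map_add_eq_mul]
          congr 1
          ring
      _ = ∑ h : ZMod N, ψ (c * h ^ 2 + d * h) * ∑ z : ZMod N, ψ (z * (2 * c * h)) := by
          rw [Finset.sum_comm]
          simp [Finset.mul_sum]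
      _ = (N : ℂ) := by
          have horth : ∀ h : ZMod N, ∑ z : ZMod N, ψ (z * (2 * c * h))
              = if 2 * c * h = 0 then (Fintype.card (ZMod N) : ℂ) else 0 := by
            intro h
            exact_mod_cast AddChar.sum_mulShift (2 * c * h) (ZMod.isPrimitive_stdAddChar N)
          have hiff : ∀ h : ZMod N, (2 * c * h = 0) ↔ h = 0 := fun h =>
            h2c.mul_right_eq_zero
          simp only [horth, hiff, mul_ite, mul_zero, Finset.sum_ite_eq',
            Finset.mem_univ, if_true, ZMod.card]
          simp
  have hns : Complex.normSq G = (N : ℝ) := by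
    have := Complex.mul_conj G
    rw [key] at this
    exact_mod_cast this.symm
  rw [Complex.norm_def, hns]

lemma sum_range_zmod (F : ZMod N → ℂ) :
    ∑ l ∈ Finset.range N, F ((l : ℕ) : ZMod N) = ∑ y : ZMod N, F y := by
  refine Finset.sum_nbij' (fun l => ((l : ℕ) : ZMod N)) (fun y => y.val) ?_ ?_ ?_ ?_ ?_
  · intro a _; exact Finset.mem_univ _
  · intro y _; exact Finset.mem_range.mpr y.val_lt
  · intro a ha; exact ZMod.val_cast_of_lt (Finset.mem_range.mp ha)
  · intro y _; exact ZMod.natCast_rightInverse y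
  · intro a _; rfl

end aux

theorem Sf_bound (A B C a : ℤ) (q₀ : ℕ) (r n m : ℤ)
    (hq : 1 ≤ q₀) (hodd : Odd q₀)
    (hr : Int.gcd r (q₀ : ℤ) = 1) (hC : Int.gcd C (q₀ : ℤ) = 1)
    (hdisc : A * C - B ^ 2 = a ^ 2) (ha : a ≠ 0) :
    ‖Sf A B C q₀ r n m‖ ≤ (q₀ : ℝ) ^ (-(1 / 2 : ℝ)) := by
  haveI : NeZero q₀ := ⟨by omega⟩
  have hq0 : (0 : ℝ) < q₀ := by exact_mod_cast hq
  -- the quadratic leading coefficient is a unit mod q₀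
  have hc : IsUnit (((r * C : ℤ) : ZMod q₀)) := by
    have h1 : IsCoprime (r * C) (q₀ : ℤ) :=
      (Int.isCoprime_iff_gcd_eq_one.mpr hr).mul_left (Int.isCoprime_iff_gcd_eq_one.mpr hC)
    obtain ⟨u, v, huv⟩ := h1
    refine IsUnit.of_mul_eq_one ((u : ZMod q₀)) ?_
    have : ((u * (r * C) + v * q₀ : ℤ) : ZMod q₀) = 1 := by rw [huv]; norm_num
    push_cast at this ⊢
    rw [ZMod.natCast_self] at this
    linear_combination this
  -- inner sum bound
  have inner : ∀ k : ℕ, ‖(∑ l ∈ Finset.range q₀,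
      Complex.exp (2 * Real.pi * Complex.I *
        ((r * (A * (k : ℤ) ^ 2 + 2 * B * k * l + C * (l : ℤ) ^ 2) + n * k + m * l : ℤ) : ℂ)
          / (q₀ : ℂ)))‖ ≤ Real.sqrt q₀ := by
    intro k
    set c : ZMod q₀ := ((r * C : ℤ) : ZMod q₀)
    set d : ZMod q₀ := ((2 * r * B * k + m : ℤ) : ZMod q₀)
    set e : ZMod q₀ := ((r * A * k ^ 2 + n * k : ℤ) : ZMod q₀)
    have hterm : ∀ l : ℕ,
        Complex.exp (2 * Real.pi * Complex.I *
          ((r * (A * (k : ℤ) ^ 2 + 2 * B * k * l + C * (l : ℤ) ^ 2) + n * k + m * l : ℤ) : ℂ)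
            / (q₀ : ℂ))
        = ZMod.stdAddChar (c * ((l : ℕ) : ZMod q₀) ^ 2 + d * ((l : ℕ) : ZMod q₀) + e) := by
      intro l
      rw [show (c * ((l : ℕ) : ZMod q₀) ^ 2 + d * ((l : ℕ) : ZMod q₀) + e)
          = (((r * (A * (k : ℤ) ^ 2 + 2 * B * k * l + C * (l : ℤ) ^ 2) + n * k + m * l : ℤ))
            : ZMod q₀) by push_cast [c, d, e]; ring]
      rw [ZMod.stdAddChar_coe]
    refine le_of_eq ?_
    calc ‖(∑ l ∈ Finset.range q₀,
          Complex.exp (2 * Real.pi * Complex.I *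
            ((r * (A * (k : ℤ) ^ 2 + 2 * B * k * l + C * (l : ℤ) ^ 2) + n * k + m * l : ℤ) : ℂ)
              / (q₀ : ℂ)))‖
        = ‖(∑ y : ZMod q₀, ZMod.stdAddChar (c * y ^ 2 + d * y + e))‖ := by
          rw [← sum_range_zmod (fun y => ZMod.stdAddChar (c * y ^ 2 + d * y + e))]
          exact congrArg _ (Finset.sum_congr rfl fun l _ => hterm l)
      _ = ‖((∑ y : ZMod q₀, ZMod.stdAddChar (c * y ^ 2 + d * y)) * ZMod.stdAddChar e)‖ := by
          rw [Finset.sum_mul]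
          exact congrArg _ (Finset.sum_congr rfl fun y _ => (AddChar.map_add_eq_mul _ _ _))
      _ = Real.sqrt q₀ := by
          rw [norm_mul, std_abs, mul_one, gauss_abs hodd c d hc]
  -- put it together
  rw [Sf, norm_mul]
  have h1 : ‖(((q₀ : ℂ) ^ 2)⁻¹)‖ = ((q₀ : ℝ) ^ 2)⁻¹ := by
    rw [norm_inv, norm_pow, Complex.norm_natCast]
  rw [h1]
  have h2 : ‖(∑ k ∈ Finset.range q₀, ∑ l ∈ Finset.range q₀,
      Complex.exp (2 * Real.pi * Complex.I *
        ((r * (A * (k : ℤ) ^ 2 + 2 * B * k * l + C * (l : ℤ) ^ 2) + n * k + m * l : ℤ) : ℂ)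
          / (q₀ : ℂ)))‖ ≤ q₀ * Real.sqrt q₀ := by
    calc _ ≤ ∑ k ∈ Finset.range q₀, ‖(∑ l ∈ Finset.range q₀,
          Complex.exp (2 * Real.pi * Complex.I *
            ((r * (A * (k : ℤ) ^ 2 + 2 * B * k * l + C * (l : ℤ) ^ 2) + n * k + m * l : ℤ) : ℂ)
              / (q₀ : ℂ)))‖ := norm_sum_le _ _
      _ ≤ ∑ k ∈ Finset.range q₀, Real.sqrt q₀ := Finset.sum_le_sum fun k _ => inner k
      _ = q₀ * Real.sqrt q₀ := by rw [Finset.sum_const, Finset.card_range, nsmul_eq_mul]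
  have hfin : ((q₀ : ℝ) ^ 2)⁻¹ * (q₀ * Real.sqrt q₀) = (q₀ : ℝ) ^ (-(1 / 2 : ℝ)) := by
    rw [Real.rpow_neg hq0.le, ← Real.sqrt_eq_rpow]
    have hmm : Real.sqrt q₀ * Real.sqrt q₀ = q₀ := Real.mul_self_sqrt hq0.le
    have hs : Real.sqrt q₀ ≠ 0 := ne_of_gt (Real.sqrt_pos.mpr hq0)
    field_simp
    linear_combination hmm
  calc ((q₀ : ℝ) ^ 2)⁻¹ * ‖_‖ ≤ ((q₀ : ℝ) ^ 2)⁻¹ * (q₀ * Real.sqrt q₀) := by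
        apply mul_le_mul_of_nonneg_left h2 (by positivity)
    _ = _ := hfin
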